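/- For positive integers n ≥ 2 and s ≤ r, consider the transitive tournament on vertex set {0, 1, ..., n^r − 1} (each edge between i < j is oriented from i to j) with its edges colored by the digit coloring. Then every directed path whose edges use at most s colors has at most n^s vertices. In particular, for m a perfect r-th power, there is an r-coloring of the transitive tournament on m vertices in which every directed path using at most s colors has at most m^{s/r} vertices. -/

import Mathlib

/-- The digit coloring: the color of the pair `{i, j}` (for `i ≠ j` less than `n^r`)
is the position `d ∈ {1, …, r}`, counted from the most significant digit, of the
leftmost digit in which the `r`-digit base-`n` representations of `i` and `j` differ.
(The digit of `i` at position `d` is `i / n^(r-d) % n`; for `i ≠ j < n^r` the set of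
differing positions is a nonempty subset of `{1, …, r}`, and we take its minimum.) -/
noncomputable def digitColor (n r i j : ℕ) : ℕ :=
  sInf {d : ℕ | i / n ^ (r - d) % n ≠ j / n ^ (r - d) % n}

namespace DCAux


def dig (n r x d : ℕ) : ℕ := x / n ^ (r - d) % n

lemma key_div (n r z k : ℕ) (hk : k + 1 ≤ r) :
    z / n ^ (r - (k+1)) = n * (z / n ^ (r - k)) + dig n r z (k+1) := by
  have h1 : r - k = (r - (k+1)) + 1 := by omega
  have h2 : z / n ^ (r - k) = z / n ^ (r - (k+1)) / n := by
    rw [h1, pow_succ, Nat.div_div_eq_div_mul]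
  rw [h2, dig]
  exact (Nat.div_add_mod _ _).symm

lemma div_eq_of_digits_eq (n r x y : ℕ) (hx : x < n ^ r) (hy : y < n ^ r) :
    ∀ k, (∀ d, 0 < d → d ≤ k → dig n r x d = dig n r y d) →
      x / n ^ (r - k) = y / n ^ (r - k) := by
  intro k
  induction k with
  | zero =>
    intro _
    simp [Nat.div_eq_of_lt hx, Nat.div_eq_of_lt hy]
  | succ k ih =>
    intro h
    have hih := ih (fun d hd hdk => h d hd (le_trans hdk (Nat.le_succ k)))
    by_cases hkr : k + 1 ≤ r
    · rw [key_div n r x k hkr, key_div n r y k hkr, hih, h (k+1) (by omega) le_rfl]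
    · have heq : r - (k+1) = r - k := by omega
      rw [heq]; exact hih

lemma color_spec (n r x y : ℕ) (hn : 2 ≤ n) (hx : x < n ^ r) (hy : y < n ^ r)
    (hxy : x < y) :
    1 ≤ digitColor n r x y ∧ digitColor n r x y ≤ r ∧
    (∀ d, d < digitColor n r x y → dig n r x d = dig n r y d) ∧
    dig n r x (digitColor n r x y) < dig n r y (digitColor n r x y) := by
  have hdc : digitColor n r x y = sInf {d : ℕ | dig n r x d ≠ dig n r y d} := rfl
  set D : Set ℕ := {d : ℕ | dig n r x d ≠ dig n r y d} with hD
  have hex : ∃ d, d ∈ D ∧ d ≤ r := by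
    by_contra hcon
    push_neg at hcon
    have : ∀ d, 0 < d → d ≤ r → dig n r x d = dig n r y d := by
      intro d _ hdr
      by_contra hne
      have := hcon d hne
      omega
    have := div_eq_of_digits_eq n r x y hx hy r this
    simp at this
    omega
  obtain ⟨d1, hd1D, hd1r⟩ := hex
  have hne : D.Nonempty := ⟨d1, hd1D⟩
  have hmem : digitColor n r x y ∈ D := by rw [hdc]; exact Nat.sInf_mem hne
  have hler : digitColor n r x y ≤ r := by rw [hdc]; exact le_trans (Nat.sInf_le hd1D) hd1r
  have h0 : (0 : ℕ) ∉ D := by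
    simp only [hD, Set.mem_setOf_eq, dig, Nat.sub_zero, not_not]
    rw [Nat.div_eq_of_lt hx, Nat.div_eq_of_lt hy]
  have h1 : 1 ≤ digitColor n r x y := by
    rcases Nat.eq_zero_or_pos (digitColor n r x y) with h | h
    · rw [h] at hmem; exact absurd hmem h0
    · exact h
  have hlt : ∀ d, d < digitColor n r x y → dig n r x d = dig n r y d := by
    intro d hd
    rw [hdc] at hd
    have := Nat.notMem_of_lt_sInf hd
    simpa [hD, not_not] using this
  refine ⟨h1, hler, hlt, ?_⟩
  set d₀ := digitColor n r x y with hd₀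
  have hpr : (d₀ - 1) + 1 = d₀ := by omega
  have hdiv := div_eq_of_digits_eq n r x y hx hy (d₀ - 1)
    (fun d hd hdk => hlt d (by omega))
  have hkx := key_div n r x (d₀ - 1) (by omega)
  have hky := key_div n r y (d₀ - 1) (by omega)
  rw [hpr] at hkx hky
  have hq : x / n ^ (r - d₀) ≤ y / n ^ (r - d₀) := Nat.div_le_div_right hxy.le
  have hdig : dig n r x d₀ ≠ dig n r y d₀ := hmem
  rw [hdiv] at hkx
  omega

lemma geom (n : ℕ) (hn : 1 ≤ n) : ∀ k, (∑ e ∈ Finset.range k, (n-1) * n^e) + 1 = n^k := by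
  intro k
  induction k with
  | zero => simp
  | succ k ih =>
    rw [Finset.sum_range_succ, pow_succ]
    obtain ⟨m, rfl⟩ : ∃ m, n = m + 1 := ⟨n - 1, by omega⟩
    simp only [Nat.add_sub_cancel] at *
    nlinarith [ih]


lemma chain'_imp_mem {α : Type*} {R R' : α → α → Prop} :
    ∀ l : List α, l.Chain' R → (∀ x ∈ l, ∀ y ∈ l, R x y → R' x y) → l.Chain' R'
  | [], _, _ => List.isChain_nil
  | [_], _, _ => List.isChain_singleton _
  | a :: b :: t, h, hm => by
      unfold List.Chain' at h ⊢
      rw [List.isChain_cons_cons] at h ⊢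
      refine ⟨hm a (by simp) b (by simp) h.1, chain'_imp_mem (b :: t) h.2 ?_⟩
      intro x hx y hy hr
      exact hm x (List.mem_cons_of_mem a hx) y (List.mem_cons_of_mem a hy) hr

lemma main (n r s : ℕ) (hn : 2 ≤ n) (hs : 0 < s) (hsr : s ≤ r)
    (S : Finset ℕ) (hS : S.card ≤ s) (l : List ℕ)
    (hb : ∀ x ∈ l, x < n ^ r)
    (hl : l.Chain' (fun x y => x < y ∧ digitColor n r x y ∈ S)) :
    l.length ≤ n ^ s := by
  classical
  set S' : Finset ℕ := S ∩ Finset.Icc 1 r with hS'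
  set g : ℕ → ℕ := fun x => ∑ d ∈ S', dig n r x d * n ^ (r - d) with hg
  -- step: g strictly increases along edges
  have step : ∀ x y : ℕ, x < n ^ r → y < n ^ r → x < y → digitColor n r x y ∈ S → g x < g y := by
    intro x y hx hy hxy hcS
    obtain ⟨h1, h2, h3, h4⟩ := color_spec n r x y hn hx hy hxy
    set d₀ := digitColor n r x y with hd₀
    have hd₀S' : d₀ ∈ S' := by
      simp only [hS', Finset.mem_inter, Finset.mem_Icc]
      exact ⟨hcS, h1, h2⟩
    -- split sums
    have hsplit : ∀ z : ℕ, (∑ d ∈ S', dig n r z d * n ^ (r - d)) =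
        (∑ d ∈ S'.filter (· < d₀), dig n r z d * n ^ (r - d)) +
        (dig n r z d₀ * n ^ (r - d₀) +
         ∑ d ∈ S'.filter (d₀ < ·), dig n r z d * n ^ (r - d)) := by
      intro z
      rw [← Finset.sum_filter_add_sum_filter_not S' (· < d₀)]
      congr 1
      have hmem : d₀ ∈ S'.filter (fun d => ¬ d < d₀) := by
        simp [hd₀S']
      have herase : (S'.filter (fun d => ¬ d < d₀)).erase d₀ = S'.filter (d₀ < ·) := by
        ext a
        simp only [Finset.mem_erase, Finset.mem_filter]
        constructor
        · rintro ⟨hne, hm, hnlt⟩; exact ⟨hm, by omega⟩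
        · rintro ⟨hm, hlt⟩; exact ⟨by omega, hm, by omega⟩
      rw [← Finset.add_sum_erase _ _ hmem, herase]
    have hA : ∀ d ∈ S'.filter (· < d₀), dig n r x d * n ^ (r - d) =
        dig n r y d * n ^ (r - d) := by
      intro d hd
      simp only [Finset.mem_filter] at hd
      rw [h3 d hd.2]
    have hAeq : (∑ d ∈ S'.filter (· < d₀), dig n r x d * n ^ (r - d)) =
        ∑ d ∈ S'.filter (· < d₀), dig n r y d * n ^ (r - d) :=
      Finset.sum_congr rfl hA
    -- bound the tail
    have htail : (∑ d ∈ S'.filter (d₀ < ·), dig n r x d * n ^ (r - d)) + 1 ≤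
        n ^ (r - d₀) := by
      have hb1 : (∑ d ∈ S'.filter (d₀ < ·), dig n r x d * n ^ (r - d)) ≤
          ∑ d ∈ S'.filter (d₀ < ·), (n - 1) * n ^ (r - d) := by
        apply Finset.sum_le_sum
        intro d _
        have : dig n r x d < n := Nat.mod_lt _ (by omega)
        exact Nat.mul_le_mul_right _ (by omega)
      have hb2 : (∑ d ∈ S'.filter (d₀ < ·), (n - 1) * n ^ (r - d)) =
          ∑ e ∈ (S'.filter (d₀ < ·)).image (r - ·), (n - 1) * n ^ e := by
        rw [Finset.sum_image]
        intro a ha b hb hab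
        simp only [Finset.mem_coe, Finset.mem_filter, hS', Finset.mem_inter, Finset.mem_Icc] at ha hb
        dsimp only at hab
        omega
      have hb3 : (S'.filter (d₀ < ·)).image (r - ·) ⊆ Finset.range (r - d₀) := by
        intro e he
        simp only [Finset.mem_image, Finset.mem_filter, hS', Finset.mem_inter,
          Finset.mem_Icc] at he
        obtain ⟨a, ⟨⟨_, _, har⟩, hd0a⟩, rfl⟩ := he
        simp only [Finset.mem_range]
        omega
      have hb4 : (∑ e ∈ (S'.filter (d₀ < ·)).image (r - ·), (n - 1) * n ^ e) ≤
          ∑ e ∈ Finset.range (r - d₀), (n - 1) * n ^ e :=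
        Finset.sum_le_sum_of_subset hb3
      have hb5 := geom n (by omega) (r - d₀)
      omega
    -- combine
    have hgx := hsplit x
    have hgy := hsplit y
    have hbigy : 0 ≤ ∑ d ∈ S'.filter (d₀ < ·), dig n r y d * n ^ (r - d) := Nat.zero_le _
    have hmul : dig n r x d₀ * n ^ (r - d₀) + n ^ (r - d₀) ≤
        dig n r y d₀ * n ^ (r - d₀) := by
      have : (dig n r x d₀ + 1) * n ^ (r - d₀) ≤ dig n r y d₀ * n ^ (r - d₀) :=
        Nat.mul_le_mul_right _ (by omega)
      rw [add_one_mul] at this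
      exact this
    simp only [hg]
    rw [hgx, hgy, hAeq]
    omega
  -- now counting
  have hSc : S'.card ≤ s := le_trans (Finset.card_le_card Finset.inter_subset_left) hS
  set t : ℕ → (↥S' → Fin n) :=
    fun x d => ⟨dig n r x (d : ℕ), Nat.mod_lt _ (by omega)⟩ with ht
  have hgt : ∀ x y : ℕ, t x = t y → g x = g y := by
    intro x y hxy
    apply Finset.sum_congr rfl
    intro d hd
    have := congrFun hxy ⟨d, hd⟩
    have := congrArg Fin.val this
    simp only [ht] at this
    rw [this]
  have hchain : l.Chain' (fun a b => g a < g b) := by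
    refine chain'_imp_mem l hl ?_
    rintro a ha b hbm ⟨h1, h2⟩
    exact step a b (hb a ha) (hb b hbm) h1 h2
  haveI : IsTrans ℕ (fun a b => g a < g b) := ⟨fun _ _ _ h1 h2 => lt_trans h1 h2⟩
  have hpw : l.Pairwise (fun a b => g a < g b) :=
    List.isChain_iff_pairwise.mp hchain
  have htne : l.Pairwise (fun a b => t a ≠ t b) :=
    hpw.imp (fun h hc => absurd (hgt _ _ hc) (Nat.ne_of_lt h))
  have hnd : (l.map t).Nodup := List.pairwise_map.mpr htne
  have hcard : (l.map t).length ≤ Fintype.card (↥S' → Fin n) :=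
    hnd.length_le_card
  rw [List.length_map] at hcard
  have hcf : Fintype.card (↥S' → Fin n) = n ^ S'.card := by
    rw [Fintype.card_fun, Fintype.card_fin, Fintype.card_coe]
  rw [hcf] at hcard
  exact le_trans hcard (Nat.pow_le_pow_right (by omega) hSc)


lemma bind_eq_map {α β : Type*} (f : α → β) :
    ∀ l : List α, (l.flatMap fun a => [f a]) = l.map f := by
  intro l
  induction l with
  | nil => rfl
  | cons a t ih => simp [ih]

lemma part2_big (k r s : ℕ) (hk : 2 ≤ k) (hs : 0 < s) (hsr : s ≤ r) :
    ∃ c : Fin (k ^ r) → Fin (k ^ r) → Fin r,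
      ∀ S : Finset (Fin r), S.card ≤ s →
        ∀ l : List (Fin (k ^ r)),
          l.Chain' (fun x y => x < y ∧ c x y ∈ S) →
          (l.length : ℝ) ≤ ((k ^ r : ℕ) : ℝ) ^ ((s : ℝ) / (r : ℝ)) := by
  have hr : 0 < r := lt_of_lt_of_le hs hsr
  refine ⟨fun x y => ⟨min (digitColor k r (x : ℕ) (y : ℕ)) r - 1, by omega⟩, ?_⟩
  intro S hS l hl
  set Sn : Finset ℕ := S.image (fun i : Fin r => (i : ℕ) + 1) with hSn
  have hSnc : Sn.card ≤ s := le_trans Finset.card_image_le hS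
  have hb : ∀ x ∈ l.map (fun a : Fin (k ^ r) => (a : ℕ)), x < k ^ r := by
    intro x hx
    obtain ⟨a, _, rfl⟩ := List.mem_map.mp hx
    exact a.isLt
  have hchain : (l.map (fun a : Fin (k ^ r) => (a : ℕ))).Chain'
      (fun x y => x < y ∧ digitColor k r x y ∈ Sn) := by
    unfold List.Chain' at hl ⊢
    rw [List.isChain_map]
    refine List.IsChain.imp ?_ hl
    rintro a b ⟨hab, hcab⟩
    refine ⟨hab, ?_⟩
    obtain ⟨h1, h2, -, -⟩ := color_spec k r a b hk a.isLt b.isLt hab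
    refine Finset.mem_image.mpr ⟨⟨min (digitColor k r (a : ℕ) (b : ℕ)) r - 1, by omega⟩, hcab, ?_⟩
    simp only
    omega
  have hlen := main k r s hk hs hsr Sn hSnc _ hb hchain
  rw [List.length_map] at hlen
  have hcast : ((k ^ r : ℕ) : ℝ) ^ ((s : ℝ) / (r : ℝ)) = ((k ^ s : ℕ) : ℝ) := by
    rw [Nat.cast_pow, Nat.cast_pow, ← Real.rpow_natCast (k : ℝ) r,
      ← Real.rpow_natCast (k : ℝ) s, ← Real.rpow_mul (by positivity)]
    congr 1
    field_simp
  rw [hcast]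
  exact_mod_cast hlen

end DCAux

open DCAux in
/-- For `n ≥ 2` and positive integers `s ≤ r`, in the digit-colored transitive
tournament on `{0, 1, …, n^r − 1}` (edges oriented from smaller to larger), every
directed path whose edges use at most `s` colors has at most `n^s` vertices.
In particular, for every perfect `r`-th power `m`, there is an `r`-coloring of the
transitive tournament on `m` vertices in which every directed path using at most
`s` colors has at most `m^(s/r)` vertices. -/
theorem stmt_10 (n r s : ℕ) (hn : 2 ≤ n) (hs : 0 < s) (hsr : s ≤ r) :
    (∀ S : Finset ℕ, S.card ≤ s →
      ∀ l : List (Fin (n ^ r)),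
        l.Chain' (fun x y => x < y ∧ digitColor n r (x : ℕ) (y : ℕ) ∈ S) →
        l.length ≤ n ^ s) ∧
    (∀ m : ℕ, (∃ k : ℕ, m = k ^ r) →
      ∃ c : Fin m → Fin m → Fin r,
        ∀ S : Finset (Fin r), S.card ≤ s →
          ∀ l : List (Fin m),
            l.Chain' (fun x y => x < y ∧ c x y ∈ S) →
            (l.length : ℝ) ≤ (m : ℝ) ^ ((s : ℝ) / (r : ℝ))) := by
  have hr : 0 < r := lt_of_lt_of_le hs hsr
  constructor
  · intro S hS l hl
    have hlist : (do let a ← l; pure ((a : Fin (n ^ r)) : ℕ)) =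
        l.map (fun a : Fin (n ^ r) => (a : ℕ)) := bind_eq_map _ l
    rw [hlist] at hl
    have hb : ∀ x ∈ l.map (fun a : Fin (n ^ r) => (a : ℕ)), x < n ^ r := by
      intro x hx
      obtain ⟨a, _, rfl⟩ := List.mem_map.mp hx
      exact a.isLt
    have := main n r s hn hs hsr S hS _ hb hl
    rwa [List.length_map] at this
  · rintro m ⟨k, rfl⟩
    match k with
    | 0 =>
      have hm0 : (0 : ℕ) ^ r = 0 := Nat.zero_pow hr
      refine ⟨fun x _ => (Fin.cast hm0 x).elim0, ?_⟩
      intro S hS l hl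
      have hlen : l.length = 0 := by
        cases l with
        | nil => rfl
        | cons a t => exact (Fin.cast hm0 a).elim0
      rw [hlen]
      push_cast
      exact Real.rpow_nonneg (by positivity) _
    | 1 =>
      refine ⟨fun _ _ => ⟨0, hr⟩, ?_⟩
      intro S hS l hl
      have hlen : l.length ≤ 1 := by
        match l with
        | [] => simp
        | [a] => simp
        | a :: b :: t =>
          unfold List.Chain' at hl
          rw [List.isChain_cons_cons] at hl
          have hab : a = b := by
            have : Fin.cast (one_pow r) a = Fin.cast (one_pow r) b :=
              Subsingleton.elim _ _
            have hv := congrArg Fin.val this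
            simp only [Fin.coe_cast] at hv
            exact Fin.ext hv
          exact absurd hl.1.1 (by rw [hab]; exact lt_irrefl b)
      calc (l.length : ℝ) ≤ 1 := by exact_mod_cast hlen
        _ = ((1 ^ r : ℕ) : ℝ) ^ ((s : ℝ) / (r : ℝ)) := by simp
    | (k + 2) =>
      exact part2_big (k + 2) r s (by omega) hs hsr
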